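/- Let α: ℝ → ℝ≥0 be a convex, even C¹ function with α(0)=α'(0)=0, α' concave on [0,∞). Let α* be its Legendre transform, α*(h) = sup_t (ht - α(t)), and define ω_{α*}(x) = sup_{u>0} α*(ux)/α*(u). Then for any u ∈ (0,1), ω_{α*}(u) ≤ u². -/

import Mathlib

open Real Set

/-- Key scaling inequality: `u² α(s) ≤ α(u s)` for `0 < u ≤ 1`. -/
lemma alpha_scaling (α : ℝ → ℝ)
    (heven : ∀ t, α (-t) = α t)
    (hC1 : ContDiff ℝ 1 α) (h0 : α 0 = 0) (h0' : deriv α 0 = 0)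
    (hconc : ConcaveOn ℝ (Set.Ici 0) (deriv α))
    (u : ℝ) (hu : 0 < u) (hu1 : u ≤ 1) :
    ∀ s : ℝ, u ^ 2 * α s ≤ α (u * s) := by
  have hdiff : Differentiable ℝ α := hC1.differentiable one_ne_zero
  set f : ℝ → ℝ := fun t => α (u * t) - u ^ 2 * α t with hf
  have hf' : ∀ t : ℝ, HasDerivAt f (u * deriv α (u * t) - u ^ 2 * deriv α t) t := by
    intro t
    have hg : HasDerivAt (fun y : ℝ => u * y) u t := by
      simpa using (hasDerivAt_id t).const_mul u
    have h1 : HasDerivAt (fun t : ℝ => α (u * t)) (deriv α (u * t) * u) t :=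
      (hdiff (u * t)).hasDerivAt.comp t hg
    have h2 : HasDerivAt (fun t : ℝ => u ^ 2 * α t) (u ^ 2 * deriv α t) t :=
      (hdiff t).hasDerivAt.const_mul (u ^ 2)
    have := h1.sub h2
    convert this using 1
    all_goals first | rfl | ring
  have hmono : MonotoneOn f (Set.Ici 0) := by
    apply monotoneOn_of_deriv_nonneg (convex_Ici 0)
    · exact fun t _ => ((hf' t).continuousAt).continuousWithinAt
    · intro t _
      exact ((hf' t).differentiableAt).differentiableWithinAt
    · intro t ht
      rw [interior_Ici] at ht
      rw [(hf' t).deriv]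
      have hcc := hconc.2 (show t ∈ Set.Ici (0:ℝ) from Set.mem_Ici.2 (le_of_lt ht))
        (Set.self_mem_Ici) hu.le
        (by linarith : (0:ℝ) ≤ 1 - u) (by ring)
      simp only [smul_eq_mul, mul_zero, add_zero, h0', mul_zero, add_zero] at hcc
      nlinarith [hcc]
  have key : ∀ s : ℝ, 0 ≤ s → u ^ 2 * α s ≤ α (u * s) := by
    intro s hs
    have := hmono (Set.mem_Ici.2 (le_refl (0:ℝ))) (Set.mem_Ici.2 hs) hs
    simp only [hf, mul_zero, h0] at this
    linarith
  intro s
  rcases le_or_gt 0 s with hs | hs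
  · exact key s hs
  · have h1 : α (u * s) = α (u * (-s)) := by
      rw [show u * s = -(u * (-s)) by ring, heven]
    have h2 : α s = α (-s) := by rw [← heven s]
    rw [h1, h2]
    exact key (-s) (by linarith)

/-- Lemma 5.4 (iii): with `α*` the Legendre transform of `α` and
`ω_{α*}(x) = sup_{v>0} α*(vx)/α*(v)`, for any `u ∈ (0,1)` one has `ω_{α*}(u) ≤ u²`. -/
theorem omega_alpha_star_bound (α : ℝ → ℝ) (hnn : ∀ t, 0 ≤ α t)
    (hconv : ConvexOn ℝ Set.univ α) (heven : ∀ t, α (-t) = α t)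
    (hC1 : ContDiff ℝ 1 α) (h0 : α 0 = 0) (h0' : deriv α 0 = 0)
    (hconc : ConcaveOn ℝ (Set.Ici 0) (deriv α))
    (αstar : ℝ → ℝ)
    (hαstar : ∀ h : ℝ, IsLUB {v : ℝ | ∃ t : ℝ, v = h * t - α t} (αstar h)) :
    ∀ u ∈ Set.Ioo (0 : ℝ) 1,
      (⨆ v : {v : ℝ // 0 < v}, αstar ((v : ℝ) * u) / αstar (v : ℝ)) ≤ u ^ 2 := by
  intro u hu
  obtain ⟨hu0, hu1⟩ := hu
  have hscal := alpha_scaling α heven hC1 h0 h0' hconc u hu0 hu1.le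
  have hnonneg : ∀ v : ℝ, 0 ≤ αstar v := by
    intro v
    have := (hαstar v).1 (show (0:ℝ) ∈ {x : ℝ | ∃ t, x = v * t - α t} from ⟨0, by simp [h0]⟩)
    exact this
  have hmain : ∀ v : ℝ, 0 < v → αstar (v * u) ≤ u ^ 2 * αstar v := by
    intro v hv
    apply (hαstar (v * u)).2
    rintro x ⟨t, rfl⟩
    have hmem : v * (t / u) - α (t / u) ≤ αstar v := (hαstar v).1 ⟨t / u, rfl⟩
    have hα : u ^ 2 * α (t / u) ≤ α t := by
      have := hscal (t / u)
      rwa [show u * (t / u) = t by field_simp] at this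
    calc v * u * t - α t = u ^ 2 * (v * (t / u)) - α t := by
          field_simp
      _ ≤ u ^ 2 * (v * (t / u)) - u ^ 2 * α (t / u) := by linarith
      _ = u ^ 2 * (v * (t / u) - α (t / u)) := by ring
      _ ≤ u ^ 2 * αstar v := mul_le_mul_of_nonneg_left hmem (sq_nonneg u)
  haveI : Nonempty {v : ℝ // 0 < v} := ⟨⟨1, one_pos⟩⟩
  apply ciSup_le
  intro ⟨v, hv⟩
  simp only
  rcases eq_or_lt_of_le (hnonneg v) with heq | hpos
  · rw [← heq, div_zero]
    positivity
  · rw [div_le_iff₀ hpos]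
    exact hmain v hv
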